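/- arXiv:2004.01408 — 6 statements merged into one kernel-verified Lean document; each statement's English description precedes it below -/
import Mathlib

section
/- Let f : ℝ^d → ℝ^n be a function, let R', V, N be subsets of ℝ^d with R' contained in the convex hull of V, and let f̄', f_', f̄, f_ : ℝ^d → ℝ^n be affine maps. Suppose: (i) f_'(x) ≤ f(x) ≤ f̄'(x) componentwise for all x ∈ R'; (ii) f_(x) ≤ f(x) ≤ f̄(x) componentwise for all x ∈ N; and (iii) f̄'(v) ≤ f̄(v) and f_(v) ≤ f_'(v) componentwise for all v ∈ V. Then f_(x) ≤ f(x) ≤ f̄(x) componentwise for all x ∈ R' ∪ N. -/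
lemma affine_le_of_convexHull {d n : ℕ} (g h : (Fin d → ℝ) →ᵃ[ℝ] (Fin n → ℝ))
    (V : Set (Fin d → ℝ)) (hV : ∀ v ∈ V, g v ≤ h v) :
    ∀ x ∈ convexHull ℝ V, g x ≤ h x := by
  have hconv : Convex ℝ ((h - g) ⁻¹' Set.Ici (0 : Fin n → ℝ)) :=
    (convex_Ici (0 : Fin n → ℝ)).affine_preimage (h - g)
  have hsub : convexHull ℝ V ⊆ (h - g) ⁻¹' Set.Ici 0 := by
    apply convexHull_min _ hconv
    intro v hv
    simp only [Set.mem_preimage, Set.mem_Ici, AffineMap.coe_sub, Pi.sub_apply]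
    exact sub_nonneg.mpr (hV v hv)
  intro x hx
  have := hsub hx
  simp only [Set.mem_preimage, Set.mem_Ici, AffineMap.coe_sub, Pi.sub_apply] at this
  exact sub_nonneg.mp this

/-- One step of incremental abstraction: if the previous affine pair
`(fl', fu')` brackets `f` on `R'`, the new affine pair `(fl, fu)` brackets `f`
on the newly added points `N` and encloses the previous pair on a set `V` of
vertices whose convex hull contains `R'`, then `(fl, fu)` brackets `f` on
`R' ∪ N`. -/
theorem incremental_abstraction_step (d n : ℕ)
    (f : (Fin d → ℝ) → (Fin n → ℝ))
    (R' V N : Set (Fin d → ℝ))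
    (hRV : R' ⊆ convexHull ℝ V)
    (fu' fl' fu fl : (Fin d → ℝ) →ᵃ[ℝ] (Fin n → ℝ))
    (hprev : ∀ x ∈ R', fl' x ≤ f x ∧ f x ≤ fu' x)
    (hnew : ∀ x ∈ N, fl x ≤ f x ∧ f x ≤ fu x)
    (hencl : ∀ v ∈ V, fu' v ≤ fu v ∧ fl v ≤ fl' v) :
    ∀ x ∈ R' ∪ N, fl x ≤ f x ∧ f x ≤ fu x := by
  have hu := affine_le_of_convexHull fu' fu V (fun v hv => (hencl v hv).1)
  have hl := affine_le_of_convexHull fl fl' V (fun v hv => (hencl v hv).2)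
  intro x hx
  rcases hx with hx | hx
  · exact ⟨le_trans (hl x (hRV hx)) (hprev x hx).1,
      le_trans (hprev x hx).2 (hu x (hRV hx))⟩
  · exact hnew x hx
end

section
/- Let f : ℝ^d → ℝ^n be a function, let κ ≥ 1 be an integer, and let ∅ = R_0 ⊆ R_1 ⊆ ⋯ ⊆ R_κ be finite subsets of ℝ^d. For each k ∈ {1, …, κ}, let f̄_k, f_k : ℝ^d → ℝ^n be affine maps such that: (i) f_k(x) ≤ f(x) ≤ f̄_k(x) componentwise for all x ∈ R_k \ R_{k−1}; and (ii) for every k ∈ {2, …, κ}, f̄_{k−1}(v) ≤ f̄_k(v) and f_k(v) ≤ f_{k−1}(v) componentwise for every extreme point v of the convex hull of R_{k−1}. Then f_κ(x) ≤ f(x) ≤ f̄_κ(x) componentwise for all x ∈ R_κ. -/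
lemma affine_nonneg_of_extreme {d : ℕ} (S : Set (Fin d → ℝ)) (hS : S.Finite)
    (g : (Fin d → ℝ) →ᵃ[ℝ] ℝ)
    (h : ∀ v ∈ Set.extremePoints ℝ (convexHull ℝ S), 0 ≤ g v) :
    ∀ x ∈ S, 0 ≤ g x := by
  intro x hx
  set C := convexHull ℝ S with hC
  have hcomp : IsCompact C := hS.isCompact_convexHull ℝ
  have hconv : Convex ℝ C := convex_convexHull ℝ S
  have hclos := closure_convexHull_extremePoints hcomp hconv
  have hxC : x ∈ C := subset_convexHull ℝ S hx
  rw [← hclos] at hxC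
  have himg : g '' (convexHull ℝ (Set.extremePoints ℝ C)) ⊆ Set.Ici 0 := by
    rw [AffineMap.image_convexHull]
    exact convexHull_min (by rintro _ ⟨v, hv, rfl⟩; exact h v hv) (convex_Ici 0)
  have hcont : Continuous g := g.continuous_of_finiteDimensional
  have : g x ∈ closure (Set.Ici (0 : ℝ)) :=
    closure_mono himg (image_closure_subset_closure_image hcont ⟨x, hxC, rfl⟩)
  rwa [closure_Ici] at this

lemma affine_le_of_extreme {d n : ℕ} (S : Set (Fin d → ℝ)) (hS : S.Finite)
    (u w : (Fin d → ℝ) →ᵃ[ℝ] (Fin n → ℝ))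
    (h : ∀ v ∈ Set.extremePoints ℝ (convexHull ℝ S), u v ≤ w v) :
    ∀ x ∈ S, u x ≤ w x := by
  intro x hx i
  have := affine_nonneg_of_extreme S hS ((AffineMap.proj i).comp (w - u))
    (fun v hv => by
      simpa [AffineMap.proj_apply, sub_nonneg] using h v hv i) x hx
  simpa [AffineMap.proj_apply, sub_nonneg] using this

/-- Inductive core of the incremental abstraction theorem: if at every
increment `k ∈ {1, …, κ}` the affine pair `(fl k, fu k)` brackets `f` at the
newly added points `R k \ R (k-1)`, and for `k ∈ {2, …, κ}` the pair at
increment `k` encloses the pair at increment `k-1` at every extreme point of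
the convex hull of `R (k-1)`, then the final pair `(fl κ, fu κ)` brackets `f`
on all of `R κ`. -/
theorem incremental_abstraction_induction (d n : ℕ) (κ : ℕ) (hκ : 1 ≤ κ)
    (f : (Fin d → ℝ) → (Fin n → ℝ))
    (R : ℕ → Set (Fin d → ℝ))
    (hfin : ∀ k ≤ κ, (R k).Finite)
    (hR0 : R 0 = ∅)
    (hmono : ∀ k, k < κ → R k ⊆ R (k + 1))
    (fu fl : ℕ → ((Fin d → ℝ) →ᵃ[ℝ] (Fin n → ℝ)))
    (hbracket : ∀ k, 1 ≤ k → k ≤ κ → ∀ x ∈ R k \ R (k - 1),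
      fl k x ≤ f x ∧ f x ≤ fu k x)
    (hencl : ∀ k, 2 ≤ k → k ≤ κ →
      ∀ v ∈ Set.extremePoints ℝ (convexHull ℝ (R (k - 1))),
        fu (k - 1) v ≤ fu k v ∧ fl k v ≤ fl (k - 1) v) :
    ∀ x ∈ R κ, fl κ x ≤ f x ∧ f x ≤ fu κ x := by
  have main : ∀ k, 1 ≤ k → k ≤ κ → ∀ x ∈ R k, fl k x ≤ f x ∧ f x ≤ fu k x := by
    intro k
    induction k with
    | zero => omega
    | succ m ih =>
      intro _ hle x hx
      rcases Nat.eq_zero_or_pos m with rfl | hm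
      · exact hbracket 1 le_rfl hle x (by simp [hR0, hx])
      · by_cases hxm : x ∈ R m
        · have hIH := ih hm (by omega) x hxm
          have hext := hencl (m + 1) (by omega) hle
          have hu : ∀ y ∈ R m, fu m y ≤ fu (m + 1) y :=
            affine_le_of_extreme (R m) (hfin m (by omega)) _ _
              (fun v hv => (hext v (by simpa using hv)).1)
          have hl : ∀ y ∈ R m, fl (m + 1) y ≤ fl m y :=
            affine_le_of_extreme (R m) (hfin m (by omega)) _ _
              (fun v hv => (hext v (by simpa using hv)).2)
          exact ⟨(hl x hxm).trans hIH.1, hIH.2.trans (hu x hxm)⟩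
        · exact hbracket (m + 1) (by omega) hle x ⟨hx, by simpa using hxm⟩
  exact main κ hκ le_rfl
end

section
/- Let f : ℝ^d → ℝ^n be a function, let κ ≥ 1 be an integer, let σ ≥ 0, and let ∅ = R_0 ⊆ R_1 ⊆ ⋯ ⊆ R_κ be finite subsets of ℝ^d. For each k ∈ {1, …, κ}, let f̄_k, f_k : ℝ^d → ℝ^n be affine maps such that: (i) f_k(x) ≤ f(x) ≤ f̄_k(x) componentwise for all x ∈ R_k \ R_{k−1}; and (ii) for k ≥ 2, f̄_{k−1}(v) ≤ f̄_k(v) and f_k(v) ≤ f_{k−1}(v) componentwise for every extreme point v of the convex hull of R_{k−1}. Suppose moreover that for every x in the convex hull of R_κ there exist finitely many points v_1, …, v_p ∈ R_κ and nonnegative weights w_1, …, w_p summing to 1 with x = Σ_i w_i v_i and |f_j(x) − Σ_i w_i f_j(v_i)| ≤ σ for every component j ∈ {1, …, n}. Then for all x in the convex hull of R_κ, f_κ(x) − σ·𝟙 ≤ f(x) ≤ f̄_κ(x) + σ·𝟙 componentwise, where 𝟙 ∈ ℝ^n is the all-ones vector. -/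
section Aux

variable {d n : ℕ}

lemma affine_nonneg_convexHull (a : (Fin d → ℝ) →ᵃ[ℝ] ℝ) {s : Set (Fin d → ℝ)}
    (h : ∀ x ∈ s, 0 ≤ a x) : ∀ x ∈ convexHull ℝ s, 0 ≤ a x := by
  have hsub : s ⊆ a ⁻¹' Set.Ici 0 := fun x hx => h x hx
  have := convexHull_min hsub ((convex_Ici (0:ℝ)).affine_preimage a)
  exact fun x hx => this hx

lemma hull_eq_hull_extremePoints {s : Set (Fin d → ℝ)} (hs : s.Finite) :
    convexHull ℝ s = convexHull ℝ (Set.extremePoints ℝ (convexHull ℝ s)) := by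
  have hcomp : IsCompact (convexHull ℝ s) := hs.isCompact_convexHull (𝕜 := ℝ)
  have hclos := closure_convexHull_extremePoints hcomp (convex_convexHull ℝ s)
  have hfin : (Set.extremePoints ℝ (convexHull ℝ s)).Finite :=
    hs.subset (extremePoints_convexHull_subset)
  rw [← (hfin.isClosed_convexHull (𝕜 := ℝ)).closure_eq, hclos]

lemma affine_le_hull {g1 g2 : (Fin d → ℝ) →ᵃ[ℝ] (Fin n → ℝ)} {s : Set (Fin d → ℝ)}
    (hs : s.Finite)
    (h : ∀ v ∈ Set.extremePoints ℝ (convexHull ℝ s), g1 v ≤ g2 v) :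
    ∀ x ∈ convexHull ℝ s, g1 x ≤ g2 x := by
  intro x hx j
  set a : (Fin d → ℝ) →ᵃ[ℝ] ℝ := (LinearMap.proj j).toAffineMap.comp (g2 - g1) with ha
  have hav : ∀ y, a y = g2 y j - g1 y j := by
    intro y; simp [ha]
  have hx' : x ∈ convexHull ℝ (Set.extremePoints ℝ (convexHull ℝ s)) := by
    rw [← hull_eq_hull_extremePoints hs]; exact hx
  have := affine_nonneg_convexHull a
    (fun v hv => by rw [hav]; exact sub_nonneg.2 (h v hv j)) x hx'
  rw [hav] at this
  linarith

end Aux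

/-- The paper's Theorem 1 (incremental affine abstraction): the affine pair
obtained from the incremental abstraction algorithm, after being dilated by
the interpolation error bound `σ` times the all-ones vector, over-approximates
`f` over the entire convex hull of the final operating region `R κ`. -/
theorem incremental_abstraction_final (d n : ℕ) (κ : ℕ) (hκ : 1 ≤ κ)
    (σ : ℝ) (hσ : 0 ≤ σ)
    (f : (Fin d → ℝ) → (Fin n → ℝ))
    (R : ℕ → Set (Fin d → ℝ))
    (hfin : ∀ k ≤ κ, (R k).Finite)
    (hR0 : R 0 = ∅)
    (hmono : ∀ k, k < κ → R k ⊆ R (k + 1))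
    (fu fl : ℕ → ((Fin d → ℝ) →ᵃ[ℝ] (Fin n → ℝ)))
    (hbracket : ∀ k, 1 ≤ k → k ≤ κ → ∀ x ∈ R k \ R (k - 1),
      fl k x ≤ f x ∧ f x ≤ fu k x)
    (hencl : ∀ k, 2 ≤ k → k ≤ κ →
      ∀ v ∈ Set.extremePoints ℝ (convexHull ℝ (R (k - 1))),
        fu (k - 1) v ≤ fu k v ∧ fl k v ≤ fl (k - 1) v)
    (hinterp : ∀ x ∈ convexHull ℝ (R κ),
      ∃ (p : ℕ) (v : Fin p → (Fin d → ℝ)) (w : Fin p → ℝ),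
        (∀ i, v i ∈ R κ) ∧ (∀ i, 0 ≤ w i) ∧ (∑ i, w i = 1) ∧
        (x = ∑ i, w i • v i) ∧
        (∀ j : Fin n, |f x j - ∑ i, w i * f (v i) j| ≤ σ)) :
    ∀ x ∈ convexHull ℝ (R κ),
      fl κ x - σ • (fun _ : Fin n => (1 : ℝ)) ≤ f x ∧
      f x ≤ fu κ x + σ • (fun _ : Fin n => (1 : ℝ)) := by
  -- key claim: the bracket holds on all of R k, by induction
  have key : ∀ k, 1 ≤ k → k ≤ κ → ∀ v ∈ R k, fl k v ≤ f v ∧ f v ≤ fu k v := by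
    intro k
    induction k with
    | zero => omega
    | succ k ih =>
      intro _ hkκ v hv
      by_cases hvk : v ∈ R k
      · -- v in previous region: use IH plus enclosure at extreme points
        have hk1 : 1 ≤ k := by
          rcases Nat.eq_zero_or_pos k with h0 | h1
          · subst h0; simp [hR0] at hvk
          · exact h1
        have ihv := ih hk1 (by omega) v hvk
        have h2 : 2 ≤ k + 1 := by omega
        have hext := hencl (k + 1) h2 hkκ
        simp only [Nat.add_sub_cancel] at hext
        have hvhull : v ∈ convexHull ℝ (R k) := subset_convexHull ℝ _ hvk
        have hRkfin : (R k).Finite := hfin k (by omega)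
        have hupper : fu k v ≤ fu (k+1) v :=
          affine_le_hull hRkfin (fun w hw => (hext w hw).1) v hvhull
        have hlower : fl (k+1) v ≤ fl k v :=
          affine_le_hull hRkfin (fun w hw => (hext w hw).2) v hvhull
        exact ⟨le_trans hlower ihv.1, le_trans ihv.2 hupper⟩
      · exact hbracket (k + 1) (by omega) hkκ v ⟨hv, by simpa using hvk⟩
  -- now the main statement
  intro x hx
  obtain ⟨p, v, w, hvR, hw0, hw1, hxeq, herr⟩ := hinterp x hx
  -- fu κ x = ∑ w i • fu κ (v i), same for fl
  have haff : ∀ (g : (Fin d → ℝ) →ᵃ[ℝ] (Fin n → ℝ)),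
      g x = ∑ i, w i • g (v i) := by
    intro g
    have h1 : x = Finset.univ.affineCombination ℝ v w := by
      rw [Finset.affineCombination_eq_linear_combination _ _ _ hw1]; exact hxeq
    rw [h1, Finset.map_affineCombination _ _ _ hw1,
      Finset.affineCombination_eq_linear_combination _ _ _ hw1]
    rfl
  constructor <;> intro j
  · -- lower bound
    have h1 : ∀ i, fl κ (v i) j ≤ f (v i) j := fun i => (key κ hκ le_rfl (v i) (hvR i)).1 j
    have h2 : (∑ i, w i • fl κ (v i)) j ≤ ∑ i, w i * f (v i) j := by
      rw [Finset.sum_apply]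
      exact Finset.sum_le_sum fun i _ => by
        have := mul_le_mul_of_nonneg_left (h1 i) (hw0 i)
        simpa using this
    have h3 := (abs_le.1 (herr j)).1
    have h4 : fl κ x j = (∑ i, w i • fl κ (v i)) j := by rw [haff (fl κ)]
    simp only [Pi.sub_apply, Pi.smul_apply, smul_eq_mul, mul_one]
    linarith
  · -- upper bound
    have h1 : ∀ i, f (v i) j ≤ fu κ (v i) j := fun i => (key κ hκ le_rfl (v i) (hvR i)).2 j
    have h2 : ∑ i, w i * f (v i) j ≤ (∑ i, w i • fu κ (v i)) j := by
      rw [Finset.sum_apply]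
      exact Finset.sum_le_sum fun i _ => by
        have := mul_le_mul_of_nonneg_left (h1 i) (hw0 i)
        simpa using this
    have h3 := (abs_le.1 (herr j)).2
    have h4 : fu κ x j = (∑ i, w i • fu κ (v i)) j := by rw [haff (fu κ)]
    simp only [Pi.add_apply, Pi.smul_apply, smul_eq_mul, mul_one]
    linarith
end

section
/- Let V be a nonempty finite subset of ℝ^d and let δ = max_{u, v ∈ V} ‖u − v‖ be its diameter (with respect to the Euclidean norm). Then for every x in the convex hull of V, there exists v ∈ V with ‖x − v‖ ≤ √(d / (2(d + 1))) · δ. -/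
open Finset in
lemma variance_identity {E : Type*} [NormedAddCommGroup E] [InnerProductSpace ℝ E]
    (t : Finset E) (w : E → ℝ) (hw1 : ∑ i ∈ t, w i = 1)
    (x : E) (hx : ∑ i ∈ t, w i • i = x) :
    ∑ i ∈ t, ∑ j ∈ t, w i * w j * ‖i - j‖ ^ 2 = 2 * ∑ i ∈ t, w i * ‖x - i‖ ^ 2 := by
  have key : ∑ i ∈ t, w i • (i - x) = 0 := by
    simp only [smul_sub, Finset.sum_sub_distrib, hx, ← Finset.sum_smul, hw1, one_smul, sub_self]
  have expand : ∀ i j : E, ‖i - j‖ ^ 2 =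
      ‖i - x‖ ^ 2 + ‖j - x‖ ^ 2 - 2 * (inner ℝ (i - x) (j - x) : ℝ) := by
    intro i j
    have h : i - j = (i - x) - (j - x) := by abel
    rw [h, @norm_sub_sq_real]
    ring
  have e1 : ∑ i ∈ t, ∑ j ∈ t, w i * w j * ‖i - x‖ ^ 2 = ∑ i ∈ t, w i * ‖x - i‖ ^ 2 := by
    have : ∀ i ∈ t, ∑ j ∈ t, w i * w j * ‖i - x‖ ^ 2 = w i * ‖x - i‖ ^ 2 := by
      intro i _
      rw [show w i * ‖x - i‖ ^ 2 = (w i * ‖i - x‖ ^ 2) * ∑ j ∈ t, w j by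
        rw [hw1, norm_sub_rev]; ring]
      rw [Finset.mul_sum]
      exact Finset.sum_congr rfl fun j _ => by ring
    exact Finset.sum_congr rfl this
  have e2 : ∑ i ∈ t, ∑ j ∈ t, w i * w j * ‖j - x‖ ^ 2 = ∑ i ∈ t, w i * ‖x - i‖ ^ 2 := by
    rw [Finset.sum_comm]
    have : ∀ j ∈ t, ∑ i ∈ t, w i * w j * ‖j - x‖ ^ 2 = w j * ‖x - j‖ ^ 2 := by
      intro j _
      rw [show w j * ‖x - j‖ ^ 2 = (w j * ‖j - x‖ ^ 2) * ∑ i ∈ t, w i by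
        rw [hw1, norm_sub_rev]; ring]
      rw [Finset.mul_sum]
      exact Finset.sum_congr rfl fun i _ => by ring
    exact Finset.sum_congr rfl this
  have e3 : ∑ i ∈ t, ∑ j ∈ t, (inner ℝ (w i • (i - x)) (w j • (j - x)) : ℝ) = 0 := by
    have h : (inner ℝ (∑ i ∈ t, w i • (i - x)) (∑ j ∈ t, w j • (j - x)) : ℝ)
        = ∑ i ∈ t, ∑ j ∈ t, (inner ℝ (w i • (i - x)) (w j • (j - x)) : ℝ) := by
      rw [sum_inner]
      exact Finset.sum_congr rfl fun i _ => inner_sum _ _ _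
    rw [← h, key, inner_zero_left]
  calc ∑ i ∈ t, ∑ j ∈ t, w i * w j * ‖i - j‖ ^ 2
      = ∑ i ∈ t, ∑ j ∈ t, (w i * w j * ‖i - x‖ ^ 2 + w i * w j * ‖j - x‖ ^ 2
          - 2 * (inner ℝ (w i • (i - x)) (w j • (j - x)) : ℝ)) := by
        refine Finset.sum_congr rfl fun i _ => Finset.sum_congr rfl fun j _ => ?_
        rw [expand i j, real_inner_smul_left, real_inner_smul_right]
        ring
    _ = (∑ i ∈ t, ∑ j ∈ t, w i * w j * ‖i - x‖ ^ 2)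
          + (∑ i ∈ t, ∑ j ∈ t, w i * w j * ‖j - x‖ ^ 2)
          - 2 * ∑ i ∈ t, ∑ j ∈ t, (inner ℝ (w i • (i - x)) (w j • (j - x)) : ℝ) := by
        simp only [Finset.sum_add_distrib, Finset.sum_sub_distrib, ← Finset.mul_sum]
    _ = 2 * ∑ i ∈ t, w i * ‖x - i‖ ^ 2 := by
        rw [e1, e2, e3]; ring

/-- Lemma 4.3 of Stämpfle 2000: every point of the convex hull of a nonempty
finite set `V ⊆ ℝ^d` with (Euclidean) diameter `δ` is within distance
`√(d / (2(d + 1))) · δ` of some point of `V`. -/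
theorem dist_to_nearest_vertex (d : ℕ)
    (V : Finset (EuclideanSpace ℝ (Fin d))) (hV : V.Nonempty)
    (δ : ℝ)
    (hδ : IsGreatest {r : ℝ | ∃ u ∈ V, ∃ v ∈ V, r = ‖u - v‖} δ) :
    ∀ x ∈ convexHull ℝ (V : Set (EuclideanSpace ℝ (Fin d))),
      ∃ v ∈ V, ‖x - v‖ ≤ Real.sqrt (d / (2 * (d + 1))) * δ := by
  classical
  intro x hx
  obtain ⟨v0, hv0⟩ := hV
  have hδ0 : 0 ≤ δ := by
    have h := hδ.2 ⟨v0, hv0, v0, hv0, rfl⟩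
    simpa using h
  have hbound : ∀ u ∈ V, ∀ v ∈ V, ‖u - v‖ ≤ δ := fun u hu v hv => hδ.2 ⟨u, hu, v, hv, rfl⟩
  -- Carathéodory
  rw [convexHull_eq_union] at hx
  simp only [Set.mem_iUnion] at hx
  obtain ⟨t, htV, hai, hxt⟩ := hx
  -- card bound
  have hcard : (t.card : ℝ) ≤ (d : ℝ) + 1 := by
    have h1 := hai.card_le_finrank_succ
    have h2 : Module.finrank ℝ (vectorSpan ℝ (Set.range ((↑) : t → EuclideanSpace ℝ (Fin d))))
        ≤ d := by
      have := Submodule.finrank_le (vectorSpan ℝ (Set.range ((↑) : t → EuclideanSpace ℝ (Fin d))))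
      simpa [finrank_euclideanSpace_fin] using this
    have : t.card ≤ d + 1 := by
      simpa [Fintype.card_coe] using h1.trans (by omega)
    exact_mod_cast this
  rw [t.convexHull_eq, Set.mem_setOf_eq] at hxt
  obtain ⟨w, hw0, hw1, hwx⟩ := hxt
  have hxrep : ∑ i ∈ t, w i • i = x := by
    rw [← hwx, Finset.centerMass_eq_of_sum_1 _ _ hw1]
    simp
  have htne : t.Nonempty := by
    rcases Finset.eq_empty_or_nonempty t with h | h
    · exfalso; rw [h] at hw1; simp at hw1
    · exact h
  have hcard1 : (1 : ℝ) ≤ (t.card : ℝ) := by exact_mod_cast htne.card_pos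
  -- the double sum bound
  have hdouble : ∑ i ∈ t, ∑ j ∈ t, w i * w j * ‖i - j‖ ^ 2
      ≤ δ ^ 2 * (1 - ∑ i ∈ t, w i ^ 2) := by
    have step : ∀ i ∈ t, ∑ j ∈ t, w i * w j * ‖i - j‖ ^ 2
        ≤ δ ^ 2 * (w i * (1 - w i)) := by
      intro i hi
      have herase : ∑ j ∈ t, w i * w j * ‖i - j‖ ^ 2
          = ∑ j ∈ t.erase i, w i * w j * ‖i - j‖ ^ 2 := by
        rw [← Finset.sum_erase_add _ _ hi]
        simp
      rw [herase]
      have hle : ∑ j ∈ t.erase i, w i * w j * ‖i - j‖ ^ 2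
          ≤ ∑ j ∈ t.erase i, w i * w j * δ ^ 2 := by
        refine Finset.sum_le_sum fun j hj => ?_
        have hb : ‖(i : EuclideanSpace ℝ (Fin d)) - j‖ ≤ δ :=
          hbound i (htV hi) j (htV (Finset.mem_of_mem_erase hj))
        have hnn : (0:ℝ) ≤ w i * w j :=
          mul_nonneg (hw0 i hi) (hw0 j (Finset.mem_of_mem_erase hj))
        exact mul_le_mul_of_nonneg_left
          (by nlinarith [norm_nonneg ((i : EuclideanSpace ℝ (Fin d)) - j)]) hnn
      refine hle.trans (le_of_eq ?_)
      have hrest : ∑ j ∈ t.erase i, w j = 1 - w i := by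
        rw [← Finset.sum_erase_add _ _ hi] at hw1; linarith
      calc ∑ j ∈ t.erase i, w i * w j * δ ^ 2
          = (w i * δ ^ 2) * ∑ j ∈ t.erase i, w j := by
            rw [Finset.mul_sum]; exact Finset.sum_congr rfl fun j _ => by ring
        _ = δ ^ 2 * (w i * (1 - w i)) := by rw [hrest]; ring
    calc ∑ i ∈ t, ∑ j ∈ t, w i * w j * ‖i - j‖ ^ 2
        ≤ ∑ i ∈ t, δ ^ 2 * (w i * (1 - w i)) := Finset.sum_le_sum step
      _ = δ ^ 2 * (1 - ∑ i ∈ t, w i ^ 2) := by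
          rw [← Finset.mul_sum]
          congr 1
          simp only [mul_sub, mul_one, Finset.sum_sub_distrib, hw1, ← sq]
  -- sum of squares lower bound
  have hsq : (1 : ℝ) / ((d : ℝ) + 1) ≤ ∑ i ∈ t, w i ^ 2 := by
    have hcs := sq_sum_le_card_mul_sum_sq (s := t) (f := w)
    rw [hw1, one_pow] at hcs
    have hsum_nn : (0:ℝ) ≤ ∑ i ∈ t, w i ^ 2 := Finset.sum_nonneg fun i _ => sq_nonneg _
    rw [div_le_iff₀ (by positivity)]
    nlinarith [hcs, hcard, hsum_nn]
  -- combine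
  have hmain : ∑ i ∈ t, w i * ‖x - i‖ ^ 2 ≤ (d : ℝ) / (2 * ((d : ℝ) + 1)) * δ ^ 2 := by
    have hvi := variance_identity t w hw1 x hxrep
    have h1 : δ ^ 2 * (1 - ∑ i ∈ t, w i ^ 2) ≤ δ ^ 2 * (1 - 1 / ((d:ℝ)+1)) :=
      mul_le_mul_of_nonneg_left (by linarith) (sq_nonneg δ)
    have h2 : (1 : ℝ) - 1 / ((d:ℝ)+1) = (d : ℝ) / ((d:ℝ)+1) := by
      field_simp; ring
    rw [h2] at h1
    have hd1 : (0:ℝ) < (d:ℝ) + 1 := by positivity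
    have hthis : 2 * ∑ i ∈ t, w i * ‖x - i‖ ^ 2 ≤ (d : ℝ) / ((d:ℝ)+1) * δ ^ 2 := by
      rw [← hvi]; linarith [hdouble]
    rw [div_mul_eq_mul_div, le_div_iff₀ hd1] at hthis
    rw [div_mul_eq_mul_div, le_div_iff₀ (by positivity)]
    ring_nf at hthis ⊢
    linarith
  -- extract witness
  have hB : ∃ i ∈ t, ‖x - i‖ ^ 2 ≤ (d : ℝ) / (2 * ((d : ℝ) + 1)) * δ ^ 2 := by
    by_contra h
    push_neg at h
    obtain ⟨i0, hi0, hwi0⟩ : ∃ i ∈ t, (0:ℝ) < w i := by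
      by_contra h'
      push_neg at h'
      have hle : ∑ i ∈ t, w i ≤ 0 := Finset.sum_nonpos h'
      rw [hw1] at hle; linarith
    set B := (d : ℝ) / (2 * ((d : ℝ) + 1)) * δ ^ 2 with hBdef
    have hlt : ∑ i ∈ t, w i * B < ∑ i ∈ t, w i * ‖x - i‖ ^ 2 := by
      refine Finset.sum_lt_sum (fun i hi => ?_) ⟨i0, hi0, ?_⟩
      · exact mul_le_mul_of_nonneg_left (h i hi).le (hw0 i hi)
      · exact mul_lt_mul_of_pos_left (h i0 hi0) hwi0
    rw [← Finset.sum_mul, hw1, one_mul] at hlt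
    linarith [hmain]
  obtain ⟨v, hvt, hvB⟩ := hB
  refine ⟨v, htV hvt, ?_⟩
  have h1 : ‖x - v‖ = Real.sqrt (‖x - v‖ ^ 2) := (Real.sqrt_sq (norm_nonneg _)).symm
  rw [h1]
  have h2 : Real.sqrt (‖x - v‖ ^ 2) ≤ Real.sqrt ((d : ℝ) / (2 * ((d : ℝ) + 1)) * δ ^ 2) :=
    Real.sqrt_le_sqrt hvB
  refine h2.trans (le_of_eq ?_)
  rw [Real.sqrt_mul (by positivity), Real.sqrt_sq hδ0]
end

section
/- Let v_0, …, v_d be affinely independent points in ℝ^d, let S be their convex hull, and let δ = max_{i, j} ‖v_i − v_j‖. Let f : ℝ^d → ℝ be Lipschitz continuous on S with Lipschitz constant λ ≥ 0, and let f_l : ℝ^d → ℝ be the unique affine map with f_l(v_i) = f(v_i) for all i ∈ {0, …, d}. Then for every s ∈ S, |f(s) − f_l(s)| ≤ λ · √(d / (2(d + 1))) · δ. -/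
open Finset RealInnerProductSpace

/-- Case (ii) of the paper's Lemma 1 (Stämpfle 2000): the linear interpolation
error of a Lipschitz function on a `d`-simplex of diameter `δ` is bounded by
`λ · √(d / (2(d + 1))) · δ`. -/
theorem interpolation_error_lipschitz (d : ℕ)
    (v : Fin (d + 1) → EuclideanSpace ℝ (Fin d))
    (hv : AffineIndependent ℝ v)
    (S : Set (EuclideanSpace ℝ (Fin d)))
    (hS : S = convexHull ℝ (Set.range v))
    (δ : ℝ)
    (hδ : IsGreatest {r : ℝ | ∃ i j, r = ‖v i - v j‖} δ)
    (f : EuclideanSpace ℝ (Fin d) → ℝ)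
    (lam : ℝ) (hlam : 0 ≤ lam)
    (hlip : ∀ x ∈ S, ∀ y ∈ S, |f x - f y| ≤ lam * ‖x - y‖)
    (fl : EuclideanSpace ℝ (Fin d) →ᵃ[ℝ] ℝ)
    (hfl : ∀ i, fl (v i) = f (v i)) :
    ∀ s ∈ S, |f s - fl s| ≤ lam * (Real.sqrt (d / (2 * (d + 1))) * δ) := by
  intro s hsS
  have hδ0 : 0 ≤ δ := by
    obtain ⟨i, j, hij⟩ := hδ.1
    exact hij ▸ norm_nonneg _
  have hδle : ∀ i j, ‖v i - v j‖ ≤ δ := fun i j => hδ.2 ⟨i, j, rfl⟩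
  have hs := hsS
  rw [hS, convexHull_range_eq_exists_affineCombination] at hs
  obtain ⟨t, w0, hw00, hw01, hx⟩ := hs
  set w : Fin (d + 1) → ℝ := Set.indicator ↑t w0 with hwdef
  have hw0 : ∀ i, 0 ≤ w i := by
    intro i
    by_cases h : i ∈ t
    · simpa [hwdef, Set.indicator_of_mem (Finset.mem_coe.2 h)] using hw00 i h
    · simp [hwdef, Set.indicator_of_notMem (fun hh => h (Finset.mem_coe.1 hh))]
  have hw1 : ∑ i, w i = 1 := by
    rw [hwdef, ← Finset.sum_indicator_subset w0 (Finset.subset_univ t)] at *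
    exact hw01
  have hcomb : Finset.univ.affineCombination ℝ v w = s := by
    rw [hwdef, ← Finset.affineCombination_indicator_subset w0 v (Finset.subset_univ t)]
    exact hx
  have hrep : s = ∑ i, w i • v i := by
    rw [← hcomb, Finset.affineCombination_eq_linear_combination _ _ _ hw1]
  have hfls : fl s = ∑ i, w i * f (v i) := by
    rw [← hcomb, Finset.map_affineCombination _ _ _ hw1 fl,
      Finset.affineCombination_eq_linear_combination _ _ _ hw1]
    simp [hfl, smul_eq_mul]
  have hvi : ∀ i, v i ∈ S := fun i => by
    rw [hS]; exact subset_convexHull ℝ _ ⟨i, rfl⟩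
  have step1 : |f s - fl s| ≤ lam * ∑ i, w i * ‖s - v i‖ := by
    have heq : f s - fl s = ∑ i, w i * (f s - f (v i)) := by
      simp only [mul_sub, Finset.sum_sub_distrib, ← Finset.sum_mul, hw1, one_mul, hfls]
    rw [heq]
    calc |∑ i, w i * (f s - f (v i))| ≤ ∑ i, |w i * (f s - f (v i))| :=
          Finset.abs_sum_le_sum_abs _ _
      _ ≤ ∑ i, w i * (lam * ‖s - v i‖) := by
          refine Finset.sum_le_sum fun i _ => ?_
          rw [abs_mul, abs_of_nonneg (hw0 i)]
          exact mul_le_mul_of_nonneg_left (hlip s hsS (v i) (hvi i)) (hw0 i)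
      _ = lam * ∑ i, w i * ‖s - v i‖ := by
          rw [Finset.mul_sum]; exact Finset.sum_congr rfl fun i _ => by ring
  set a : Fin (d + 1) → ℝ := fun i => ‖s - v i‖ with ha
  have key : ∑ i, w i * a i ≤ Real.sqrt (d / (2 * (d + 1))) * δ := by
    have hcs : (∑ i, w i * a i) ^ 2 ≤ ∑ i, w i * a i ^ 2 := by
      have := Finset.sum_mul_sq_le_sq_mul_sq Finset.univ
        (fun i => Real.sqrt (w i)) (fun i => Real.sqrt (w i) * a i)
      have h1 : ∀ i : Fin (d+1), Real.sqrt (w i) * (Real.sqrt (w i) * a i) = w i * a i := by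
        intro i; rw [← mul_assoc, Real.mul_self_sqrt (hw0 i)]
      have h3 : ∀ i : Fin (d+1), (Real.sqrt (w i) * a i) ^ 2 = w i * a i ^ 2 := by
        intro i; rw [mul_pow, Real.sq_sqrt (hw0 i)]
      simp only [h1, h3, Real.sq_sqrt (hw0 _), hw1, one_mul] at this
      exact this
    have hvar : ∑ i, w i * a i ^ 2 ≤ d / (2 * (d + 1)) * δ ^ 2 := by
      set P : ℝ := ∑ i, w i * ‖v i‖ ^ 2 with hP
      set Q : ℝ := ‖s‖ ^ 2 with hQ
      have hsq : ∑ i, w i * ⟪s, v i⟫ = Q := by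
        have h : ⟪s, s⟫ = ∑ i, w i * ⟪s, v i⟫ := by
          nth_rewrite 2 [hrep]
          rw [inner_sum]
          exact Finset.sum_congr rfl fun i _ => real_inner_smul_right s (v i) (w i)
        rw [← h, real_inner_self_eq_norm_sq]
      have hA : ∑ i, w i * a i ^ 2 = P - Q := by
        have hterm : ∀ i : Fin (d+1), w i * a i ^ 2
            = w i * Q - 2 * (w i * ⟪s, v i⟫) + w i * ‖v i‖ ^ 2 := by
          intro i
          have : a i ^ 2 = Q - 2 * ⟪s, v i⟫ + ‖v i‖ ^ 2 := norm_sub_sq_real s (v i)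
          rw [this]; ring
        rw [Finset.sum_congr rfl fun i _ => hterm i]
        rw [Finset.sum_add_distrib, Finset.sum_sub_distrib, ← Finset.sum_mul, hw1,
          ← Finset.mul_sum, hsq]
        ring
      have hssQ : ∑ i, w i * ⟪v i, s⟫ = Q := by
        have h : ⟪s, s⟫ = ∑ i, w i * ⟪v i, s⟫ := by
          nth_rewrite 1 [hrep]
          rw [sum_inner]
          exact Finset.sum_congr rfl fun i _ => real_inner_smul_left (v i) s (w i)
        rw [← h, real_inner_self_eq_norm_sq]
      have hB : ∑ i, ∑ j, w i * w j * ‖v i - v j‖ ^ 2 = 2 * (P - Q) := by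
        have hinner : ∀ i, ∑ j, w j * ⟪v i, v j⟫ = ⟪v i, s⟫ := by
          intro i
          rw [hrep, inner_sum]
          exact Finset.sum_congr rfl fun j _ =>
            (real_inner_smul_right (v i) (v j) (w j)).symm
        have hper : ∀ i : Fin (d+1), ∑ j, w i * w j * ‖v i - v j‖ ^ 2
            = w i * ‖v i‖ ^ 2 - 2 * (w i * ⟪v i, s⟫) + w i * P := by
          intro i
          have hterm : ∀ j : Fin (d+1), w i * w j * ‖v i - v j‖ ^ 2
              = w i * (w j * ‖v i‖ ^ 2) - 2 * (w i * (w j * ⟪v i, v j⟫))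
                + w i * (w j * ‖v j‖ ^ 2) := by
            intro j
            rw [norm_sub_sq_real]; ring
          rw [Finset.sum_congr rfl fun j _ => hterm j]
          rw [Finset.sum_add_distrib, Finset.sum_sub_distrib]
          simp only [← Finset.mul_sum, ← Finset.sum_mul]
          rw [hw1, hinner i, hP]
          ring
        rw [Finset.sum_congr rfl fun i _ => hper i]
        rw [Finset.sum_add_distrib, Finset.sum_sub_distrib]
        simp only [← Finset.mul_sum, ← Finset.sum_mul]
        rw [hw1, hssQ, hP]
        ring
      have hbound : ∑ i, ∑ j, w i * w j * ‖v i - v j‖ ^ 2 ≤ δ ^ 2 * (1 - ∑ i, w i ^ 2) := by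
        have step : ∑ i, ∑ j, w i * w j * ‖v i - v j‖ ^ 2
            ≤ ∑ i : Fin (d+1), ∑ j : Fin (d+1),
              (w i * w j * δ ^ 2 - if i = j then w i * w j * δ ^ 2 else 0) := by
          refine Finset.sum_le_sum fun i _ => Finset.sum_le_sum fun j _ => ?_
          by_cases h : i = j
          · subst h; simp
          · simp only [h, if_false, sub_zero]
            have h1 : ‖v i - v j‖ ^ 2 ≤ δ ^ 2 := by
              have := hδle i j
              nlinarith [norm_nonneg (v i - v j)]
            exact mul_le_mul_of_nonneg_left h1 (mul_nonneg (hw0 i) (hw0 j))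
        refine step.trans (le_of_eq ?_)
        rw [Finset.sum_congr rfl fun i (_ : i ∈ Finset.univ) => Finset.sum_sub_distrib _ _]
        rw [Finset.sum_sub_distrib]
        have e1 : ∑ i : Fin (d+1), ∑ j : Fin (d+1), w i * w j * δ ^ 2 = δ ^ 2 := by
          have : ∀ i : Fin (d+1), ∑ j, w i * w j * δ ^ 2 = w i * δ ^ 2 := by
            intro i
            rw [show (fun j => w i * w j * δ ^ 2) = fun j => (w i * δ ^ 2) * w j by
              funext j; ring]
            rw [← Finset.mul_sum, hw1, mul_one]
          rw [Finset.sum_congr rfl fun i _ => this i, ← Finset.sum_mul, hw1, one_mul]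
        have e2 : ∑ i : Fin (d+1), ∑ j : Fin (d+1),
            (if i = j then w i * w j * δ ^ 2 else 0) = (∑ i, w i ^ 2) * δ ^ 2 := by
          rw [Finset.sum_congr rfl fun i (_ : i ∈ Finset.univ) =>
            Finset.sum_ite_eq Finset.univ i (fun j => w i * w j * δ ^ 2)]
          simp only [Finset.mem_univ, if_true, Finset.sum_mul]
          exact Finset.sum_congr rfl fun i _ => by ring
        rw [e1, e2]; ring
      have hcard : 1 ≤ ((d : ℝ) + 1) * ∑ i, w i ^ 2 := by
        have := Finset.sum_mul_sq_le_sq_mul_sq Finset.univ (fun _ : Fin (d+1) => (1:ℝ)) w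
        simp only [one_mul, one_pow, Finset.sum_const, Finset.card_univ, Fintype.card_fin,
          nsmul_eq_mul, mul_one, hw1, one_pow] at this
        push_cast at this ⊢
        linarith
      have hD1 : (0:ℝ) < (d:ℝ) + 1 := by positivity
      have h2 : 2 * (∑ i, w i * a i ^ 2) ≤ δ ^ 2 * (1 - ∑ i, w i ^ 2) := by
        rw [hA, ← hB]; exact hbound
      rw [div_mul_eq_mul_div, le_div_iff₀ (by positivity)]
      nlinarith [mul_nonneg (sq_nonneg δ) (sub_nonneg.2 hcard), sq_nonneg δ,
        mul_le_mul_of_nonneg_left hcard (sq_nonneg δ)]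
    have hnn : 0 ≤ ∑ i, w i * a i :=
      Finset.sum_nonneg fun i _ => mul_nonneg (hw0 i) (norm_nonneg _)
    have h4 : (∑ i, w i * a i) ^ 2 ≤ (Real.sqrt (d / (2 * (d + 1))) * δ) ^ 2 := by
      rw [mul_pow, Real.sq_sqrt (by positivity : (0:ℝ) ≤ (d : ℝ) / (2 * (d + 1)))]
      exact hcs.trans hvar
    have := Real.sqrt_le_sqrt h4
    rwa [Real.sqrt_sq hnn, Real.sqrt_sq (by positivity)] at this
  calc |f s - fl s| ≤ lam * ∑ i, w i * a i := step1
    _ ≤ lam * (Real.sqrt (d / (2 * (d + 1))) * δ) := mul_le_mul_of_nonneg_left key hlam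
end

section
/- Let v_0, …, v_d be affinely independent points in ℝ^d, let S be their convex hull, and let δ = max_{i, j} ‖v_i − v_j‖. Let f : ℝ^d → ℝ be twice continuously differentiable on an open set containing S, with ‖f″(s)‖ ≤ H for all s ∈ S, where f″(s) denotes the second derivative (Hessian) of f at s and ‖·‖ its operator norm. Let f_l : ℝ^d → ℝ be the unique affine map with f_l(v_i) = f(v_i) for all i ∈ {0, …, d}. Then for every s ∈ S, |f(s) − f_l(s)| ≤ (1/2) · (d / (2(d + 1))) · δ² · H. -/
open Set Finset

/-- 1-D second-order Taylor bound with the 1/2 factor. -/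
lemma one_dim_taylor_half {g g' g'' : ℝ → ℝ} {M : ℝ}
    (hg : ∀ t ∈ Set.Icc (0:ℝ) 1, HasDerivAt g (g' t) t)
    (hg' : ∀ t ∈ Set.Icc (0:ℝ) 1, HasDerivAt g' (g'' t) t)
    (hM : ∀ t ∈ Set.Icc (0:ℝ) 1, |g'' t| ≤ M) :
    |g 1 - g 0 - g' 0| ≤ M / 2 := by
  have h01 : (0:ℝ) ∈ Set.Icc (0:ℝ) 1 := by norm_num
  have h11 : (1:ℝ) ∈ Set.Icc (0:ℝ) 1 := by norm_num
  -- step 1 : |g' t - g' 0| ≤ M * t on [0,1]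
  have step1 : ∀ t ∈ Set.Icc (0:ℝ) 1, |g' t - g' 0| ≤ M * t := by
    intro t ht
    have := Convex.norm_image_sub_le_of_norm_hasDerivWithin_le
      (f := g') (f' := g'') (s := Set.Icc (0:ℝ) 1) (C := M)
      (fun x hx => (hg' x hx).hasDerivWithinAt)
      (fun x hx => by simpa using hM x hx) (convex_Icc 0 1) h01 ht
    simpa [Real.norm_eq_abs, abs_of_nonneg ht.1] using this
  -- monotone auxiliary functions
  have main : ∀ (ε : ℝ), ε = 1 ∨ ε = -1 →
      ε * (g 1 - g 0 - g' 0) ≤ M / 2 := by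
    intro ε hε
    set p : ℝ → ℝ := fun t => M * t ^ 2 / 2 - ε * (g t - g 0 - t * g' 0) with hp
    have hdp : ∀ t ∈ Set.Icc (0:ℝ) 1,
        HasDerivAt p (M * t - ε * (g' t - g' 0)) t := by
      intro t ht
      have h1 : HasDerivAt (fun t : ℝ => M * t ^ 2 / 2) (M * t) t := by
        have h := ((hasDerivAt_pow 2 t).const_mul M).div_const 2
        rw [show M * t = M * ((2:ℕ) * t ^ (2 - 1)) / 2 by push_cast; ring]
        exact h
      have h2 : HasDerivAt (fun t => g t - g 0 - t * g' 0) (g' t - g' 0) t := by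
        have := ((hg t ht).sub_const (g 0)).sub ((hasDerivAt_id t).mul_const (g' 0))
        rw [one_mul] at this
        exact this
      exact h1.sub (h2.const_mul ε)
    have hmono : MonotoneOn p (Set.Icc (0:ℝ) 1) := by
      apply monotoneOn_of_deriv_nonneg (convex_Icc 0 1)
      · exact fun t ht => (hdp t ht).continuousAt.continuousWithinAt
      · rw [interior_Icc]
        exact fun t ht => ((hdp t (Set.Ioo_subset_Icc_self ht)).differentiableAt).differentiableWithinAt
      · rw [interior_Icc]
        intro t ht
        rw [(hdp t (Set.Ioo_subset_Icc_self ht)).deriv]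
        have h := step1 t (Set.Ioo_subset_Icc_self ht)
        have : ε * (g' t - g' 0) ≤ M * t := by
          rcases hε with rfl | rfl
          · nlinarith [abs_le.1 h]
          · nlinarith [abs_le.1 h]
        linarith
    have := hmono h01 h11 zero_le_one
    simp only [hp] at this
    nlinarith [this]
  have h1 := main 1 (Or.inl rfl)
  have h2 := main (-1) (Or.inr rfl)
  rw [abs_le]; constructor <;> nlinarith

/-- Multivariate second-order Taylor bound along a segment. -/
lemma taylor_two_segment {E : Type*} [NormedAddCommGroup E] [NormedSpace ℝ E]
    {f : E → ℝ} {U : Set E} (hU : IsOpen U) (hf : ContDiffOn ℝ 2 f U)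
    {x y : E} (hseg : segment ℝ x y ⊆ U) {H : ℝ}
    (hH : ∀ z ∈ segment ℝ x y, ‖iteratedFDeriv ℝ 2 f z‖ ≤ H) :
    |f y - f x - fderiv ℝ f x (y - x)| ≤ H / 2 * ‖y - x‖ ^ 2 := by
  set u := y - x with hu
  set L : ℝ → E := fun t => x + t • u with hL
  have hLmem : ∀ t ∈ Set.Icc (0:ℝ) 1, L t ∈ segment ℝ x y := by
    intro t ht
    rw [segment_eq_image']
    exact ⟨t, ht, rfl⟩
  have hLU : ∀ t ∈ Set.Icc (0:ℝ) 1, L t ∈ U := fun t ht => hseg (hLmem t ht)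
  have hdL : ∀ t : ℝ, HasDerivAt L u t := by
    intro t
    have := ((hasDerivAt_id t).smul_const u).const_add x
    simpa only [one_smul, id_eq] using this
  have hdiff1 : ∀ z ∈ U, DifferentiableAt ℝ f z := fun z hz =>
    (hf.contDiffAt (hU.mem_nhds hz)).differentiableAt two_ne_zero
  have hdiff2 : ∀ z ∈ U, DifferentiableAt ℝ (fderiv ℝ f) z := by
    intro z hz
    have h2 : ContDiffAt ℝ 2 f z := hf.contDiffAt (hU.mem_nhds hz)
    exact (h2.fderiv_right (m := 1) le_rfl).differentiableAt one_ne_zero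
  set g : ℝ → ℝ := fun t => f (L t) with hgdef
  set g' : ℝ → ℝ := fun t => fderiv ℝ f (L t) u with hg'def
  set g'' : ℝ → ℝ := fun t => fderiv ℝ (fderiv ℝ f) (L t) u u with hg''def
  have hg : ∀ t ∈ Set.Icc (0:ℝ) 1, HasDerivAt g (g' t) t := fun t ht =>
    (hdiff1 _ (hLU t ht)).hasFDerivAt.comp_hasDerivAt t (hdL t)
  have hg' : ∀ t ∈ Set.Icc (0:ℝ) 1, HasDerivAt g' (g'' t) t := by
    intro t ht
    have h1 : HasDerivAt (fun t => fderiv ℝ f (L t))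
        (fderiv ℝ (fderiv ℝ f) (L t) u) t :=
      (hdiff2 _ (hLU t ht)).hasFDerivAt.comp_hasDerivAt t (hdL t)
    have := h1.clm_apply (hasDerivAt_const t u)
    simpa using this
  have hb : ∀ t ∈ Set.Icc (0:ℝ) 1, |g'' t| ≤ H * ‖u‖ ^ 2 := by
    intro t ht
    have hHt := hH (L t) (hLmem t ht)
    have heq : g'' t = iteratedFDeriv ℝ 2 f (L t) ![u, u] := by
      rw [iteratedFDeriv_two_apply]
      simp [hg''def]
    have hle := (iteratedFDeriv ℝ 2 f (L t)).le_opNorm ![u, u]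
    rw [hg''def] at heq ⊢
    rw [heq]
    calc ‖iteratedFDeriv ℝ 2 f (L t) ![u, u]‖
        ≤ ‖iteratedFDeriv ℝ 2 f (L t)‖ * ∏ i, ‖(![u, u]) i‖ := hle
      _ ≤ H * ‖u‖ ^ 2 := by
          rw [Fin.prod_univ_two]
          have h0 : (0:ℝ) ≤ ‖u‖ * ‖u‖ := mul_nonneg (norm_nonneg _) (norm_nonneg _)
          simp only [Matrix.cons_val_zero, Matrix.cons_val_one, Matrix.head_cons]
          nlinarith [norm_nonneg (iteratedFDeriv ℝ 2 f (L t))]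
  have key := one_dim_taylor_half hg hg' hb
  have hL0 : L 0 = x := by simp [hL]
  have hL1 : L 1 = y := by simp [hL, hu]
  have : g 1 = f y := by rw [hgdef]; simp [hL1]
  have h0 : g 0 = f x := by rw [hgdef]; simp [hL0]
  have h0' : g' 0 = fderiv ℝ f x u := by rw [hg'def]; simp [hL0]
  rw [this, h0, h0'] at key
  calc |f y - f x - fderiv ℝ f x (y - x)| ≤ H * ‖u‖ ^ 2 / 2 := by rw [hu] at key ⊢; exact key
    _ = H / 2 * ‖y - x‖ ^ 2 := by rw [hu]; ring

/-- Case (iv) of the paper's Lemma 1 (Stämpfle 2000): the linear interpolation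
error of a `C²` function on a `d`-simplex of diameter `δ` is bounded by
`(1/2) · (d / (2(d + 1))) · δ² · H`, where `H` bounds the operator norm of the
second derivative on the simplex. -/
theorem interpolation_error_C2 (d : ℕ)
    (v : Fin (d + 1) → EuclideanSpace ℝ (Fin d))
    (hv : AffineIndependent ℝ v)
    (S : Set (EuclideanSpace ℝ (Fin d)))
    (hS : S = convexHull ℝ (Set.range v))
    (δ : ℝ)
    (hδ : IsGreatest {r : ℝ | ∃ i j, r = ‖v i - v j‖} δ)
    (f : EuclideanSpace ℝ (Fin d) → ℝ)
    (U : Set (EuclideanSpace ℝ (Fin d))) (hU : IsOpen U) (hSU : S ⊆ U)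
    (hf : ContDiffOn ℝ 2 f U)
    (H : ℝ)
    (hH : ∀ s ∈ S, ‖iteratedFDeriv ℝ 2 f s‖ ≤ H)
    (fl : EuclideanSpace ℝ (Fin d) →ᵃ[ℝ] ℝ)
    (hfl : ∀ i, fl (v i) = f (v i)) :
    ∀ s ∈ S, |f s - fl s| ≤ (1 / 2) * ((d : ℝ) / (2 * (d + 1))) * δ ^ 2 * H := by
  intro s hs
  have hδ0 : 0 ≤ δ := by obtain ⟨i, j, hij⟩ := hδ.1; rw [hij]; positivity
  have hH0 : (0:ℝ) ≤ H := le_trans (norm_nonneg _) (hH s hs)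
  have hd1 : (0:ℝ) < (d:ℝ) + 1 := by positivity
  -- barycentric coordinates
  have hs' := hs
  rw [hS, convexHull_range_eq_exists_affineCombination] at hs'
  obtain ⟨t, w, hw0, hw1, hws⟩ := hs'
  set c : Fin (d+1) → ℝ := Set.indicator (↑t) w with hc
  have hc0 : ∀ i, 0 ≤ c i := fun i =>
    Set.indicator_apply_nonneg (fun h => hw0 i (by simpa using h))
  have hc1 : ∑ i, c i = 1 := by
    rw [hc, ← hw1]
    rw [Finset.sum_indicator_subset _ (Finset.subset_univ t)]
  have hsc : ∑ i, c i • v i = s := by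
    rw [← Finset.affineCombination_eq_linear_combination _ _ _ hc1, hc,
      ← Finset.affineCombination_indicator_subset w v (Finset.subset_univ t)]
    exact hws
  -- convexity of S
  have hSconv : Convex ℝ S := hS ▸ convex_convexHull ℝ _
  have hvS : ∀ i, v i ∈ S := fun i => hS ▸ subset_convexHull ℝ _ (Set.mem_range_self i)
  set D := fderiv ℝ f s with hD
  -- Taylor at each vertex
  have htay : ∀ i, |f (v i) - f s - D (v i - s)| ≤ H / 2 * ‖v i - s‖ ^ 2 := by
    intro i
    have hseg : segment ℝ s (v i) ⊆ S := hSconv.segment_subset hs (hvS i)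
    exact taylor_two_segment hU hf (hseg.trans hSU) (fun z hz => hH z (hseg hz))
  -- fl s as a combination
  have hdec : ∀ x, fl x = fl.linear x + fl 0 := by
    intro x
    conv_lhs => rw [show x = x +ᵥ (0 : EuclideanSpace ℝ (Fin d)) by simp]
    rw [AffineMap.map_vadd]
    rfl
  have hflv : fl s = ∑ i, c i * f (v i) := by
    rw [hdec s, ← hsc, map_sum]
    have : ∀ i, fl.linear (c i • v i) = c i * (fl (v i) - fl 0) := by
      intro i
      rw [map_smul, hdec (v i)]
      ring_nf
    rw [Finset.sum_congr rfl (fun i _ => this i)]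
    simp only [mul_sub, Finset.sum_sub_distrib, ← Finset.sum_mul, hc1, one_mul]
    rw [Finset.sum_congr rfl (fun i _ => by rw [hfl i])]
    ring
  -- the derivative term sums to zero
  have hD0 : ∑ i, c i * D (v i - s) = 0 := by
    have : ∑ i, c i * D (v i - s) = D (∑ i, c i • (v i - s)) := by
      rw [map_sum]
      exact Finset.sum_congr rfl fun i _ => (D.map_smul _ _).symm
    rw [this]
    have hz : ∑ i, c i • (v i - s) = 0 := by
      simp only [smul_sub, Finset.sum_sub_distrib, hsc, ← Finset.sum_smul, hc1, one_smul,
        sub_self]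
    rw [hz, map_zero]
  -- main decomposition
  have hkey : f s - fl s = ∑ i, c i * ((f s - f (v i)) + D (v i - s)) := by
    simp only [mul_add, mul_sub, Finset.sum_add_distrib, Finset.sum_sub_distrib,
      ← Finset.sum_mul, hc1, one_mul, hD0, add_zero, hflv]
  set T := ∑ i, c i * ‖v i - s‖ ^ 2 with hT
  have habs : |f s - fl s| ≤ H / 2 * T := by
    rw [hkey, hT, Finset.mul_sum]
    refine (Finset.abs_sum_le_sum_abs _ _).trans (Finset.sum_le_sum fun i _ => ?_)
    rw [abs_mul, abs_of_nonneg (hc0 i)]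
    have : |f s - f (v i) + D (v i - s)| = |f (v i) - f s - D (v i - s)| := by
      rw [← abs_neg]; ring_nf
    rw [this]
    calc c i * |f (v i) - f s - D (v i - s)| ≤ c i * (H / 2 * ‖v i - s‖ ^ 2) :=
          mul_le_mul_of_nonneg_left (htay i) (hc0 i)
      _ = H / 2 * (c i * ‖v i - s‖ ^ 2) := by ring
  -- geometric estimate on T
  set e : Fin (d+1) → EuclideanSpace ℝ (Fin d) := fun i => v i - s with he
  have he0 : ∑ i, c i • e i = 0 := by
    simp only [he, smul_sub, Finset.sum_sub_distrib, hsc, ← Finset.sum_smul, hc1, one_smul,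
      sub_self]
  have hinner : ∑ i, ∑ j, c i * c j * (inner ℝ (e i) (e j) : ℝ) = 0 := by
    have : (inner ℝ (∑ i, c i • e i) (∑ j, c j • e j) : ℝ)
        = ∑ i, ∑ j, c i * c j * (inner ℝ (e i) (e j) : ℝ) := by
      simp_rw [sum_inner, inner_sum, real_inner_smul_left, real_inner_smul_right]
      exact Finset.sum_congr rfl fun i _ => Finset.sum_congr rfl fun j _ => by ring
    rw [← this, he0, inner_zero_left]
  have hT2 : ∑ i, ∑ j, c i * c j * ‖e i - e j‖ ^ 2 = 2 * T := by
    have expand : ∀ i j, c i * c j * ‖e i - e j‖ ^ 2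
        = c i * c j * ‖e i‖ ^ 2 - 2 * (c i * c j * (inner ℝ (e i) (e j) : ℝ))
          + c i * c j * ‖e j‖ ^ 2 := by
      intro i j
      rw [@norm_sub_sq_real]
      ring
    have hA : ∑ i, ∑ j, c i * c j * ‖e i‖ ^ 2 = T := by
      rw [hT]
      refine Finset.sum_congr rfl fun i _ => ?_
      rw [← Finset.sum_mul, ← Finset.mul_sum, hc1, mul_one]
    have hB : ∑ i, ∑ j, c i * c j * ‖e j‖ ^ 2 = T := by
      rw [Finset.sum_comm, hT]
      refine Finset.sum_congr rfl fun j _ => ?_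
      rw [Finset.sum_congr rfl fun i (_ : i ∈ Finset.univ) =>
        (show c i * c j * ‖e j‖ ^ 2 = (c j * ‖e j‖ ^ 2) * c i by ring),
        ← Finset.mul_sum, hc1, mul_one]
    calc ∑ i, ∑ j, c i * c j * ‖e i - e j‖ ^ 2
        = ∑ i, ∑ j, (c i * c j * ‖e i‖ ^ 2
            - 2 * (c i * c j * (inner ℝ (e i) (e j) : ℝ)) + c i * c j * ‖e j‖ ^ 2) :=
          Finset.sum_congr rfl fun i _ => Finset.sum_congr rfl fun j _ => expand i j
      _ = (∑ i, ∑ j, c i * c j * ‖e i‖ ^ 2)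
            - 2 * (∑ i, ∑ j, c i * c j * (inner ℝ (e i) (e j) : ℝ))
            + ∑ i, ∑ j, c i * c j * ‖e j‖ ^ 2 := by
          simp_rw [Finset.sum_add_distrib, Finset.sum_sub_distrib, Finset.mul_sum]
      _ = T - 2 * 0 + T := by rw [hA, hB, hinner]
      _ = 2 * T := by ring
  -- bound the double sum
  have hbd : ∑ i, ∑ j, c i * c j * ‖e i - e j‖ ^ 2 ≤ δ ^ 2 * (1 - ∑ i, (c i) ^ 2) := by
    have hterm : ∀ i j, c i * c j * ‖e i - e j‖ ^ 2
        ≤ c i * c j * δ ^ 2 - (if i = j then c i * c j * δ ^ 2 else 0) := by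
      intro i j
      by_cases h : i = j
      · subst h
        simp
      · rw [if_neg h, sub_zero]
        have hnorm : ‖e i - e j‖ ≤ δ := by
          have heq : e i - e j = v i - v j := by
            rw [he]
            exact sub_sub_sub_cancel_right _ _ _
          rw [heq]
          exact hδ.2 ⟨i, j, rfl⟩
        have hp := pow_le_pow_left₀ (norm_nonneg (e i - e j)) hnorm 2
        have hcc : 0 ≤ c i * c j := mul_nonneg (hc0 i) (hc0 j)
        nlinarith
    calc ∑ i, ∑ j, c i * c j * ‖e i - e j‖ ^ 2
        ≤ ∑ i, ∑ j, (c i * c j * δ ^ 2 - (if i = j then c i * c j * δ ^ 2 else 0)) :=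
          Finset.sum_le_sum fun i _ => Finset.sum_le_sum fun j _ => hterm i j
      _ = δ ^ 2 * (1 - ∑ i, (c i) ^ 2) := by
          simp_rw [Finset.sum_sub_distrib]
          have h1 : ∑ i, ∑ j, c i * c j * δ ^ 2 = δ ^ 2 := by
            have hrow : ∀ i : Fin (d+1), ∑ j, c i * c j * δ ^ 2 = c i * δ ^ 2 := by
              intro i
              rw [← Finset.sum_mul, ← Finset.mul_sum, hc1, mul_one]
            rw [Finset.sum_congr rfl fun i _ => hrow i, ← Finset.sum_mul, hc1, one_mul]
          have h2 : ∑ i, ∑ j, (if i = j then c i * c j * δ ^ 2 else 0)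
              = (∑ i, (c i) ^ 2) * δ ^ 2 := by
            have hrow : ∀ i : Fin (d+1),
                ∑ j, (if i = j then c i * c j * δ ^ 2 else 0) = (c i) ^ 2 * δ ^ 2 := by
              intro i
              rw [Finset.sum_ite_eq Finset.univ i (fun j => c i * c j * δ ^ 2)]
              simp [sq]
            rw [Finset.sum_congr rfl fun i _ => hrow i, ← Finset.sum_mul]
          rw [h1, h2]
          ring
  -- Cauchy-Schwarz for the weights
  have hcs : (1:ℝ) / ((d:ℝ) + 1) ≤ ∑ i, (c i) ^ 2 := by
    have h := sq_sum_le_card_mul_sum_sq (s := (Finset.univ : Finset (Fin (d+1)))) (f := c)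
    rw [hc1] at h
    simp only [Finset.card_univ, Fintype.card_fin, one_pow] at h
    rw [div_le_iff₀ hd1]
    push_cast at h
    linarith
  have hTle : T ≤ δ ^ 2 * ((d:ℝ) / ((d:ℝ) + 1)) / 2 := by
    have h1 : 2 * T ≤ δ ^ 2 * (1 - ∑ i, (c i) ^ 2) := hT2 ▸ hbd
    have h2 : δ ^ 2 * (1 - ∑ i, (c i) ^ 2) ≤ δ ^ 2 * (1 - 1 / ((d:ℝ) + 1)) := by
      apply mul_le_mul_of_nonneg_left _ (sq_nonneg δ)
      linarith
    have h3 : (1:ℝ) - 1 / ((d:ℝ) + 1) = (d:ℝ) / ((d:ℝ) + 1) := by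
      field_simp
      ring
    rw [h3] at h2
    linarith
  calc |f s - fl s| ≤ H / 2 * T := habs
    _ ≤ H / 2 * (δ ^ 2 * ((d:ℝ) / ((d:ℝ) + 1)) / 2) :=
        mul_le_mul_of_nonneg_left hTle (by linarith)
    _ = (1 / 2) * ((d : ℝ) / (2 * ((d:ℝ) + 1))) * δ ^ 2 * H := by
        field_simp
end
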